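/- Let F be a formal fan and let x ∈ P(F) be a point lying in the images of two rational simplices, i.e. x ∈ ξ₀(Δ^{n₀−1}) ∩ ξ₁(Δ^{n₁−1}) for elements ξ₀ ∈ F_{n₀} and ξ₁ ∈ F_{n₁}. Then there exist m ≥ 1, an element ξ ∈ F_m, morphisms φ_i : [m] → [n_i] in 𝔠 (i = 0, 1) with φ_i^*(ξ_i) = ξ, and a point of Δ^{m−1} mapping to x; in particular x lies in the image of the rational simplex ξ(Δ^{m−1}) ⊆ P(F), which is contained in both ξ₀(Δ^{n₀−1}) and ξ₁(Δ^{n₁−1}). -/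

import Mathlib

open CategoryTheory

/-- The category `𝔠` of integral simplicial cones: objects are positive integers `[n]`, and
morphisms `[k] → [n]` are the injective group homomorphisms `ℤᵏ → ℤⁿ` (encoded as `n × k`
integer matrices) carrying the standard basis of `ℤᵏ` into the cone spanned by the standard
basis of `ℤⁿ` (i.e. with nonnegative entries). -/
structure ConeCat : Type where
  n : ℕ
  pos : 0 < n

instance : Category ConeCat where
  Hom k n := {A : Matrix (Fin n.n) (Fin k.n) ℤ //
    (∀ i j, 0 ≤ A i j) ∧ Function.Injective A.mulVecLin}
  id k := ⟨1, ⟨fun i j => by by_cases h : i = j <;> simp [Matrix.one_apply, h],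
    by rw [Matrix.mulVecLin_one]; exact fun a b h => h⟩⟩
  comp f g := ⟨g.1 * f.1,
    ⟨fun i j => by
        rw [Matrix.mul_apply]
        exact Finset.sum_nonneg fun l _ => mul_nonneg (g.2.1 i l) (f.2.1 l j),
      by rw [Matrix.mulVecLin_mul, LinearMap.coe_comp]; exact g.2.2.comp f.2.2⟩⟩
  id_comp f := Subtype.ext (Matrix.mul_one _)
  comp_id f := Subtype.ext (Matrix.one_mul _)
  assoc f g h := Subtype.ext (Matrix.mul_assoc _ _ _).symm

/-- The underlying matrix of a morphism of `𝔠`. -/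
def homMatrix {k n : ConeCat} (φ : k ⟶ n) : Matrix (Fin n.n) (Fin k.n) ℤ := Subtype.val φ

/-- The points of the disjoint union `⨿ F_n × (ℝ_{≥0})ⁿ` over all cones of a formal fan
`F : 𝔠ᵒᵖ ⥤ Set`. -/
abbrev FanPt (F : ConeCatᵒᵖ ⥤ Type) : Type :=
  Σ (c : ConeCat) (_ : F.obj (Opposite.op c)), {x : Fin c.n → ℝ // ∀ i, 0 ≤ x i}

/-- The colimit-defining relation for the geometric realization `|F|`: the point `x` in the
chart of `φ^*ξ` is identified with the point `φ_ℝ(x)` in the chart of `ξ`. -/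
def fanRel (F : ConeCatᵒᵖ ⥤ Type) : FanPt F → FanPt F → Prop := fun p q =>
  ∃ φ : p.1 ⟶ q.1, F.map φ.op q.2.1 = p.2.1 ∧
    ∀ j, q.2.2.val j = ∑ i, ((homMatrix φ j i : ℤ) : ℝ) * p.2.2.val i

/-- The geometric realization `|F|` of a formal fan, as a quotient topological space. -/
abbrev GeomReal (F : ConeCatᵒᵖ ⥤ Type) : Type := Quot (fanRel F)

/-- The cone points of `|F|`: the images of the origins of the cones `(ℝ_{≥0})ⁿ`. -/
def conePoints (F : ConeCatᵒᵖ ⥤ Type) : Set (GeomReal F) :=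
  {z | ∃ p : FanPt F, (∀ i, p.2.2.val i = 0) ∧ z = Quot.mk (fanRel F) p}

/-- Scaling a point of a chart by a nonnegative scalar `c`. -/
def smulPt {F : ConeCatᵒᵖ ⥤ Type} (c : ℝ) (hc : 0 ≤ c) (p : FanPt F) : FanPt F :=
  ⟨p.1, p.2.1, ⟨fun i => c * p.2.2.val i, fun i => mul_nonneg hc (p.2.2.property i)⟩⟩

/-- The subspace `|F| ∖ {cone points}`. -/
abbrev GeomNonzero (F : ConeCatᵒᵖ ⥤ Type) : Type := {z : GeomReal F // z ∉ conePoints F}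

/-- The orbit relation for the action of `ℝ_{>0}` on `|F| ∖ {cone points}` induced by scalar
multiplication on each cone `(ℝ_{≥0})ⁿ`. -/
def scaleRel (F : ConeCatᵒᵖ ⥤ Type) : GeomNonzero F → GeomNonzero F → Prop := fun z w =>
  ∃ (c : ℝ) (hc : 0 < c) (p : FanPt F),
    z.val = Quot.mk (fanRel F) p ∧ w.val = Quot.mk (fanRel F) (smulPt c hc.le p)

/-- The quotient `(|F| ∖ {*})/ℝ_{>0}`. -/
abbrev GeomProjQuot (F : ConeCatᵒᵖ ⥤ Type) : Type := Quot (scaleRel F)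

/-- The standard simplex `Δ^{n-1}`, realized as `{x ∈ (ℝ_{≥0})ⁿ | ∑ xᵢ = 1}`. -/
abbrev stdSimplex' (n : ℕ) : Type :=
  {x : Fin n → ℝ // (∀ i, 0 ≤ x i) ∧ ∑ i, x i = 1}

/-- The points of the disjoint union `⨿ F_n × Δ^{n-1}`. -/
abbrev SimpPt (F : ConeCatᵒᵖ ⥤ Type) : Type :=
  Σ (c : ConeCat) (_ : F.obj (Opposite.op c)), stdSimplex' c.n

/-- The colimit-defining relation for the projective realization `P(F)`: the point `x` in the
simplex of `φ^*ξ` is identified with the positive rescaling of `φ_ℝ(x)` in the simplex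
of `ξ`. -/
def simpRel (F : ConeCatᵒᵖ ⥤ Type) : SimpPt F → SimpPt F → Prop := fun p q =>
  ∃ φ : p.1 ⟶ q.1, F.map φ.op q.2.1 = p.2.1 ∧
    ∃ c : ℝ, 0 < c ∧ ∀ j, q.2.2.val j = c * ∑ i, ((homMatrix φ j i : ℤ) : ℝ) * p.2.2.val i

/-- The projective realization `P(F)` of a formal fan, as a quotient topological space. -/
abbrev ProjReal (F : ConeCatᵒᵖ ⥤ Type) : Type := Quot (simpRel F)


section GenericLinearAlgebra

set_option linter.unusedSectionVars false

open Matrix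

variable {ι ι' : Type} [Fintype ι] [DecidableEq ι] [Fintype ι'] [DecidableEq ι']

/-- Over `ℚ`, for any matrix `M` there is `P = 1 - S*M` with `M*P = 0`. -/
lemma exists_proj_matrix (M : Matrix ι' ι ℚ) :
    ∃ (P : Matrix ι ι ℚ) (S : Matrix ι ι' ℚ), M * P = 0 ∧ P = 1 - S * M := by
  set f : (ι → ℚ) →ₗ[ℚ] (ι' → ℚ) := Matrix.toLin' M with hf
  obtain ⟨W, hW⟩ := Submodule.exists_isCompl (LinearMap.range f)
  set πr : (ι' → ℚ) →ₗ[ℚ] LinearMap.range f := Submodule.linearProjOfIsCompl _ W hW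
  have hsurj : LinearMap.range f.rangeRestrict = ⊤ := LinearMap.range_rangeRestrict f
  obtain ⟨h', hh'⟩ := f.rangeRestrict.exists_rightInverse_of_surjective hsurj
  set σ : (ι' → ℚ) →ₗ[ℚ] (ι → ℚ) := h'.comp πr
  have key : ∀ x, f (σ (f x)) = f x := by
    intro x
    have h1 : πr (f x) = f.rangeRestrict x := by
      have : f x ∈ LinearMap.range f := LinearMap.mem_range_self f x
      show πr (f x) = ⟨f x, this⟩
      exact Submodule.linearProjOfIsCompl_apply_left hW ⟨f x, this⟩
    have h2 : f.rangeRestrict (h' (f.rangeRestrict x)) = f.rangeRestrict x := by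
      have := LinearMap.congr_fun hh' (f.rangeRestrict x)
      exact this
    calc f (σ (f x)) = ↑(f.rangeRestrict (h' (πr (f x)))) := rfl
      _ = f x := by rw [h1, h2]; rfl
  have hMSM : M * (LinearMap.toMatrix' σ * M) = M := by
    have : f.comp (σ.comp f) = f := LinearMap.ext fun x => key x
    calc M * (LinearMap.toMatrix' σ * M)
        = LinearMap.toMatrix' f * (LinearMap.toMatrix' σ * LinearMap.toMatrix' f) := by
          rw [hf, LinearMap.toMatrix'_toLin']
      _ = LinearMap.toMatrix' (f.comp (σ.comp f)) := by
          rw [LinearMap.toMatrix'_comp, LinearMap.toMatrix'_comp]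
      _ = M := by rw [this, hf, LinearMap.toMatrix'_toLin']
  refine ⟨1 - LinearMap.toMatrix' σ * M, LinearMap.toMatrix' σ, ?_, rfl⟩
  rw [Matrix.mul_sub, Matrix.mul_one, hMSM, sub_self]


/-- Every real kernel vector of a rational matrix is a real combination of rational
kernel vectors. -/
lemma ker_span (M : Matrix ι' ι ℚ) (z : ι → ℝ)
    (hz : (M.map ((↑) : ℚ → ℝ)).mulVec z = 0) :
    ∃ p : ι → ι → ℚ, (∀ k, M.mulVec (p k) = 0) ∧ ∀ i, z i = ∑ k, z k * ((p k i : ℚ) : ℝ) := by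
  obtain ⟨P, S, hMP, hP⟩ := exists_proj_matrix M
  have hcast : ∀ (A : Matrix ι' ι ℚ) (B : Matrix ι ι' ℚ),
      (B * A).map ((↑) : ℚ → ℝ) = B.map ((↑) : ℚ → ℝ) * A.map ((↑) : ℚ → ℝ) := fun A B =>
    Matrix.map_mul (f := Rat.castHom ℝ)
  have hPz : (P.map ((↑) : ℚ → ℝ)).mulVec z = z := by
    rw [hP]
    have : ((1 : Matrix ι ι ℚ) - S * M).map ((↑) : ℚ → ℝ)
        = 1 - S.map ((↑) : ℚ → ℝ) * M.map ((↑) : ℚ → ℝ) := by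
      rw [Matrix.map_sub _ (by simp : ∀ a b : ℚ, ((a - b : ℚ) : ℝ) = a - b), hcast]
      congr 1
      exact Matrix.map_one _ (by simp) (by simp)
    rw [this, Matrix.sub_mulVec, Matrix.one_mulVec, ← Matrix.mulVec_mulVec, hz,
      Matrix.mulVec_zero, sub_zero]
  refine ⟨fun k i => P i k, ?_, ?_⟩
  · intro k
    funext j
    have := Matrix.ext_iff.2 hMP j k
    simpa [Matrix.mul_apply, Matrix.mulVec, dotProduct] using this
  · intro i
    have := congrFun hPz i
    rw [← this]
    simp [Matrix.mulVec, dotProduct, Matrix.map_apply, mul_comm]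

/-- Rational kernel vectors are dense in the real kernel. -/
lemma ker_dense (M : Matrix ι' ι ℚ) (z : ι → ℝ)
    (hz : (M.map ((↑) : ℚ → ℝ)).mulVec z = 0) {ε : ℝ} (hε : 0 < ε) :
    ∃ u : ι → ℚ, M.mulVec u = 0 ∧ ∀ i, |((u i : ℚ) : ℝ) - z i| < ε := by
  obtain ⟨p, hker, hspan⟩ := ker_span M z hz
  set C : ℝ := 1 + ∑ k, ∑ i, |((p k i : ℚ) : ℝ)| with hC
  have hCpos : 0 < C := by
    have : (0:ℝ) ≤ ∑ k, ∑ i, |((p k i : ℚ) : ℝ)| :=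
      Finset.sum_nonneg fun k _ => Finset.sum_nonneg fun i _ => abs_nonneg _
    linarith
  have hδ : 0 < ε / C := div_pos hε hCpos
  have hqk : ∀ k : ι, ∃ qk : ℚ, |z k - (qk : ℝ)| < ε / C := fun k => exists_rat_near (z k) hδ
  choose Q hQ using hqk
  refine ⟨fun i => ∑ k, Q k * p k i, ?_, ?_⟩
  · funext j
    have : ∀ k, M.mulVec (p k) j = 0 := fun k => by rw [hker k]; rfl
    simp only [Matrix.mulVec, dotProduct] at this ⊢
    calc ∑ i, M j i * ∑ k, Q k * p k i
        = ∑ i, ∑ k, Q k * (M j i * p k i) := by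
          refine Finset.sum_congr rfl fun i _ => ?_
          rw [Finset.mul_sum]
          exact Finset.sum_congr rfl fun k _ => by ring
      _ = ∑ k, Q k * ∑ i, M j i * p k i := by
          rw [Finset.sum_comm]
          exact Finset.sum_congr rfl fun k _ => by rw [Finset.mul_sum]
      _ = 0 := by
          refine Finset.sum_eq_zero fun k _ => ?_
          rw [this k, mul_zero]
  · intro i
    have hzi : z i = ∑ k, z k * ((p k i : ℚ) : ℝ) := hspan i
    have hui : ((∑ k, Q k * p k i : ℚ) : ℝ) = ∑ k, (Q k : ℝ) * ((p k i : ℚ) : ℝ) := by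
      push_cast; ring_nf
    rw [hui, hzi, ← Finset.sum_sub_distrib]
    calc |∑ k, ((Q k : ℝ) * (p k i : ℝ) - z k * (p k i : ℝ))|
        ≤ ∑ k, |(Q k : ℝ) * (p k i : ℝ) - z k * (p k i : ℝ)| := Finset.abs_sum_le_sum_abs _ _
      _ = ∑ k, |(Q k : ℝ) - z k| * |(p k i : ℝ)| := by
          refine Finset.sum_congr rfl fun k _ => ?_
          rw [← abs_mul]; ring_nf
      _ ≤ ∑ k, (ε / C) * |(p k i : ℝ)| := by
          refine Finset.sum_le_sum fun k _ => ?_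
          have := hQ k
          rw [abs_sub_comm] at this
          exact mul_le_mul_of_nonneg_right this.le (abs_nonneg _)
      _ = (ε / C) * ∑ k, |(p k i : ℝ)| := by rw [Finset.mul_sum]
      _ < ε := by
          have h1 : ∑ k, |((p k i : ℚ) : ℝ)| ≤ C - 1 := by
            rw [hC]
            have : ∀ k : ι, |((p k i : ℚ) : ℝ)| ≤ ∑ i', |((p k i' : ℚ) : ℝ)| :=
              fun k => Finset.single_le_sum (f := fun i' => |((p k i' : ℚ) : ℝ)|) (fun i' _ => abs_nonneg _) (Finset.mem_univ i)
            have := Finset.sum_le_sum fun k (_ : k ∈ Finset.univ) => this k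
            linarith
          have h2 : (ε / C) * ∑ k, |((p k i : ℚ) : ℝ)| ≤ (ε / C) * (C - 1) :=
            mul_le_mul_of_nonneg_left h1 hδ.le
          have h3 : (ε / C) * (C - 1) < (ε / C) * C := by
            apply mul_lt_mul_of_pos_left _ hδ; linarith
          have h4 : (ε / C) * C = ε := div_mul_cancel₀ ε (ne_of_gt hCpos)
          linarith

/-- Common denominator for a rational vector. -/
lemma common_denom (u : ι → ℚ) :
    ∃ (d : ℕ) (w : ι → ℤ), 0 < d ∧ ∀ i, (w i : ℚ) = (d : ℚ) * u i := by
  classical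
  refine ⟨∏ i, (u i).den, fun i => (u i).num * ((∏ j, (u j).den : ℕ) / (u i).den : ℕ), ?_, ?_⟩
  · exact Finset.prod_pos fun i _ => (u i).pos
  · intro i
    have hdvd : (u i).den ∣ ∏ j, (u j).den := Finset.dvd_prod_of_mem _ (Finset.mem_univ i)
    obtain ⟨e, he⟩ := hdvd
    have hdiv : (∏ j, (u j).den) / (u i).den = e := by
      rw [he]; exact Nat.mul_div_cancel_left e (u i).pos
    have hnum : ((u i).den : ℚ) * u i = (u i).num := by
      rw [mul_comm]
      exact_mod_cast Rat.mul_den_eq_num (u i)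
    dsimp only
    rw [hdiv, he]
    push_cast
    rw [mul_comm ((u i).den : ℚ) (e : ℚ), mul_assoc, hnum]
    ring

/-- Injectivity of an integer matrix over `ℤ` transfers to `ℝ` (via a rational left
inverse). -/
lemma inj_transfer (M : Matrix ι' ι ℤ) (h : Function.Injective M.mulVecLin)
    (x : ι → ℝ) (hx : (M.map ((↑) : ℤ → ℝ)).mulVec x = 0) : x = 0 := by
  classical
  -- rational matrix
  set Mq : Matrix ι' ι ℚ := M.map ((↑) : ℤ → ℚ) with hMq
  -- injectivity over ℚ
  have hinjq : LinearMap.ker (Matrix.toLin' Mq) = ⊥ := by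
    rw [LinearMap.ker_eq_bot']
    intro v hv
    obtain ⟨d, w, hd, hw⟩ := common_denom v
    have hMw : M.mulVec w = 0 := by
      funext j
      have : Mq.mulVec (fun i => (w i : ℚ)) j = 0 := by
        have h1 : Mq.mulVec (fun i => (w i : ℚ)) j = (d : ℚ) * Mq.mulVec v j := by
          simp only [Matrix.mulVec, dotProduct, Finset.mul_sum]
          exact Finset.sum_congr rfl fun i _ => by rw [hw i]; ring
        rw [h1]
        have : Mq.mulVec v = 0 := by
          have := hv
          rwa [Matrix.toLin'_apply] at this
        rw [this]; simp
      have : ((M.mulVec w j : ℤ) : ℚ) = 0 := by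
        rw [← this]
        simp [Matrix.mulVec, dotProduct, hMq, Matrix.map_apply]
      exact_mod_cast this
    have : M.mulVecLin w = M.mulVecLin 0 := by
      rw [Matrix.mulVecLin_apply, hMw]; simp
    have hw0 : w = 0 := h this
    funext i
    have := hw i
    rw [hw0] at this
    simp at this
    rcases this with h1 | h1
    · exact absurd h1 (by exact_mod_cast hd.ne')
    · exact h1
  obtain ⟨g, hg⟩ := (Matrix.toLin' Mq).exists_leftInverse_of_injective hinjq
  set L : Matrix ι ι' ℚ := LinearMap.toMatrix' g with hL
  have hLM : L * Mq = 1 := by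
    calc L * Mq = LinearMap.toMatrix' g * LinearMap.toMatrix' (Matrix.toLin' Mq) := by
          rw [LinearMap.toMatrix'_toLin']
      _ = LinearMap.toMatrix' (g.comp (Matrix.toLin' Mq)) := (LinearMap.toMatrix'_comp _ _).symm
      _ = 1 := by rw [hg, LinearMap.toMatrix'_id]
  -- cast to ℝ
  have hLMr : L.map ((↑) : ℚ → ℝ) * Mq.map ((↑) : ℚ → ℝ) = 1 := by
    have h0 : (L * Mq).map ((↑) : ℚ → ℝ)
        = L.map ((↑) : ℚ → ℝ) * Mq.map ((↑) : ℚ → ℝ) := by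
      have := Matrix.map_mul (L := L) (M := Mq) (f := Rat.castHom ℝ)
      simpa using this
    rw [← h0, hLM]
    exact Matrix.map_one _ (by simp) (by simp)
  have hMqr : Mq.map ((↑) : ℚ → ℝ) = M.map ((↑) : ℤ → ℝ) := by
    ext i j
    simp [hMq, Matrix.map_apply]
  calc x = (1 : Matrix ι ι ℝ).mulVec x := (Matrix.one_mulVec x).symm
    _ = (L.map ((↑) : ℚ → ℝ)).mulVec ((Mq.map ((↑) : ℚ → ℝ)).mulVec x) := by
        rw [Matrix.mulVec_mulVec, hLMr]
    _ = 0 := by rw [hMqr, hx, Matrix.mulVec_zero]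

/-- Conic decomposition: a nonnegative real kernel vector of a rational matrix is a
nonnegative combination of nonnegative rational kernel vectors. -/
lemma conic_decomp (M : Matrix ι' ι ℚ) :
    ∀ (n : ℕ) (z : ι → ℝ), (Finset.univ.filter fun i => z i ≠ 0).card ≤ n →
    (M.map ((↑) : ℚ → ℝ)).mulVec z = 0 → (∀ i, 0 ≤ z i) →
    ∃ (K : ℕ) (u : Fin K → ι → ℚ) (a : Fin K → ℝ),
      (∀ k, M.mulVec (u k) = 0) ∧ (∀ k i, 0 ≤ u k i) ∧ (∀ k, 0 ≤ a k) ∧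
      ∀ i, z i = ∑ k, a k * ((u k i : ℚ) : ℝ) := by
  classical
  intro n
  induction n with
  | zero =>
    intro z hcard hz hnn
    refine ⟨0, Fin.elim0, Fin.elim0, fun k => k.elim0, fun k => k.elim0, fun k => k.elim0, ?_⟩
    intro i
    have hz0 : z i = 0 := by
      by_contra h
      have : i ∈ Finset.univ.filter fun i => z i ≠ 0 := by simp [h]
      have := Finset.card_pos.2 ⟨i, this⟩
      omega
    simp [hz0]
  | succ n ih =>
    intro z hcard hz hnn
    set S : Finset ι := Finset.univ.filter fun i => z i ≠ 0 with hS
    by_cases hSe : S = ∅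
    · refine ⟨0, Fin.elim0, Fin.elim0, fun k => k.elim0, fun k => k.elim0, fun k => k.elim0, ?_⟩
      intro i
      have : i ∉ S := by rw [hSe]; exact Finset.notMem_empty i
      have hz0 : z i = 0 := by
        by_contra h; exact this (by simp [hS, h])
      simp [hz0]
    · obtain ⟨i₀, hi₀⟩ := Finset.nonempty_of_ne_empty hSe
      set M' : Matrix (ι' ⊕ ι) ι ℚ := Matrix.of fun j i =>
        Sum.elim (fun j' => M j' i) (fun j' => if j' ∈ S then 0 else if j' = i then 1 else 0) j
        with hM'
      have hzS : ∀ i ∈ S, 0 < z i := fun i hi => by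
        have : z i ≠ 0 := by simpa [hS] using hi
        exact lt_of_le_of_ne (hnn i) (Ne.symm this)
      have hzoff : ∀ i, i ∉ S → z i = 0 := fun i hi => by
        by_contra h; exact hi (by simp [hS, h])
      have hz' : (M'.map ((↑) : ℚ → ℝ)).mulVec z = 0 := by
        funext j
        cases j with
        | inl j' =>
          have := congrFun hz j'
          simpa [hM', Matrix.mulVec, dotProduct, Matrix.map_apply] using this
        | inr j' =>
          by_cases hj' : j' ∈ S
          · simp [hM', Matrix.mulVec, dotProduct, Matrix.map_apply, hj']
          · have hterm : ∀ i, (((if j' ∈ S then 0 else if j' = i then 1 else 0 : ℚ)) : ℝ) * z i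
                = if j' = i then z i else 0 := by
              intro i
              by_cases h : j' = i
              · subst h; simp [hj']
              · simp [h]
            simp only [hM', Matrix.mulVec, dotProduct, Matrix.map_apply, Matrix.of_apply,
              Sum.elim_inr, Pi.zero_apply]
            rw [Finset.sum_congr rfl fun i _ => hterm i]
            rw [Finset.sum_ite_eq (Finset.univ) j' (fun i => z i)]
            simp [hzoff j' hj']
      obtain ⟨im, himS, him⟩ := Finset.exists_min_image S z ⟨i₀, hi₀⟩
      have hzim : 0 < z im := hzS im himS
      obtain ⟨u, huker, hunear⟩ := ker_dense M' z hz' (half_pos hzim)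
      have hMu : M.mulVec u = 0 := by
        funext j'
        have := congrFun huker (Sum.inl j')
        simpa [hM', Matrix.mulVec, dotProduct] using this
      have huoff : ∀ i, i ∉ S → u i = 0 := by
        intro i hi
        have := congrFun huker (Sum.inr i)
        have hrow : ∀ i', M' (Sum.inr i) i' = if i = i' then 1 else 0 := by
          intro i'; simp [hM', hi]
        simp only [Matrix.mulVec, dotProduct, Pi.zero_apply] at this
        rw [Finset.sum_congr rfl fun i' _ => by rw [hrow i']] at this
        simpa using this
      have huS : ∀ i ∈ S, 0 < u i := by
        intro i hi
        have h1 := hunear i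
        have h2 : z im ≤ z i := him i hi
        have h3 : (u i : ℝ) > z i - z im / 2 := by
          have := abs_lt.1 h1
          linarith [this.1]
        have : (0:ℝ) < (u i : ℝ) := by linarith
        exact_mod_cast this
      have hunn : ∀ i, 0 ≤ u i := by
        intro i
        by_cases h : i ∈ S
        · exact (huS i h).le
        · rw [huoff i h]
      obtain ⟨j₀, hj₀S, hj₀⟩ := Finset.exists_min_image S (fun i => z i / ((u i : ℚ) : ℝ)) ⟨i₀, hi₀⟩
      set t₀ : ℝ := z j₀ / ((u j₀ : ℚ) : ℝ) with ht₀
      have huj₀ : (0:ℝ) < ((u j₀ : ℚ) : ℝ) := by exact_mod_cast huS j₀ hj₀S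
      have ht₀pos : 0 < t₀ := div_pos (hzS j₀ hj₀S) huj₀
      set z' : ι → ℝ := fun i => z i - t₀ * ((u i : ℚ) : ℝ) with hz'def
      have hz'nn : ∀ i, 0 ≤ z' i := by
        intro i
        by_cases h : i ∈ S
        · have h1 : t₀ ≤ z i / ((u i : ℚ) : ℝ) := hj₀ i h
          have h2 : (0:ℝ) < ((u i : ℚ) : ℝ) := by exact_mod_cast huS i h
          have h3 : t₀ * ((u i : ℚ) : ℝ) ≤ z i := by
            calc t₀ * ((u i : ℚ) : ℝ) ≤ (z i / ((u i : ℚ) : ℝ)) * ((u i : ℚ) : ℝ) :=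
                  mul_le_mul_of_nonneg_right h1 h2.le
              _ = z i := div_mul_cancel₀ _ (ne_of_gt h2)
          simp only [hz'def]; linarith
        · simp only [hz'def]
          rw [huoff i h, hzoff i h]; simp
      have hz'j₀ : z' j₀ = 0 := by
        simp only [hz'def, ht₀]
        field_simp
        simp
      have hz'off : ∀ i, i ∉ S → z' i = 0 := by
        intro i hi
        simp only [hz'def]
        rw [huoff i hi, hzoff i hi]; simp
      have hz'ker : (M.map ((↑) : ℚ → ℝ)).mulVec z' = 0 := by
        funext j
        have h1 := congrFun hz j
        have h2 : (∑ i, ((M j i : ℚ) : ℝ) * ((u i : ℚ) : ℝ)) = 0 := by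
          have h3 : ((M.mulVec u j : ℚ) : ℝ) = 0 := by rw [hMu]; simp
          rw [← h3]
          simp [Matrix.mulVec, dotProduct]
        simp only [Matrix.mulVec, dotProduct, Matrix.map_apply, Pi.zero_apply] at h1 ⊢
        calc ∑ i, ((M j i : ℚ) : ℝ) * z' i
            = (∑ i, ((M j i : ℚ) : ℝ) * z i)
              - t₀ * ∑ i, ((M j i : ℚ) : ℝ) * ((u i : ℚ) : ℝ) := by
              rw [Finset.mul_sum, ← Finset.sum_sub_distrib]
              exact Finset.sum_congr rfl fun i _ => by simp only [hz'def]; ring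
          _ = 0 := by rw [h1, h2]; ring
      have hz'card : (Finset.univ.filter fun i => z' i ≠ 0).card ≤ n := by
        have hsub : (Finset.univ.filter fun i => z' i ≠ 0) ⊆ S.erase j₀ := by
          intro i hi
          have hne : z' i ≠ 0 := by simpa using hi
          have hiS : i ∈ S := by
            by_contra h
            exact hne (hz'off i h)
          have hij : i ≠ j₀ := by
            intro h
            rw [h] at hne
            exact hne hz'j₀
          exact Finset.mem_erase.2 ⟨hij, hiS⟩
        have h1 := Finset.card_le_card hsub
        have h2 : (S.erase j₀).card = S.card - 1 := Finset.card_erase_of_mem hj₀S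
        have h3 : 0 < S.card := Finset.card_pos.2 ⟨j₀, hj₀S⟩
        omega
      obtain ⟨K, us, as, hker', hnn', ha', hsum'⟩ := ih z' hz'card hz'ker hz'nn
      refine ⟨K + 1, Fin.cons u us, Fin.cons t₀ as, ?_, ?_, ?_, ?_⟩
      · intro k
        refine Fin.cases ?_ ?_ k
        · simpa using hMu
        · intro k'; simpa using hker' k'
      · intro k
        refine Fin.cases ?_ ?_ k
        · simpa using hunn
        · intro k'; simpa using hnn' k'
      · intro k
        refine Fin.cases ?_ ?_ k
        · simpa using ht₀pos.le
        · intro k'; simpa using ha' k'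
      · intro i
        rw [Fin.sum_univ_succ]
        simp only [Fin.cons_zero, Fin.cons_succ]
        rw [← hsum' i]
        simp only [hz'def]; ring

/-- Conic Carathéodory: a nonnegative combination can be rewritten as a nonnegative
combination over a subset on which the vectors are linearly independent. -/
lemma caratheodory_cone {κ V : Type} [DecidableEq κ] [AddCommGroup V] [Module ℝ V] (g : κ → V) :
    ∀ (n : ℕ) (t : Finset κ) (c : κ → ℝ), t.card ≤ n → (∀ k ∈ t, 0 ≤ c k) →
    ∃ (t' : Finset κ) (c' : κ → ℝ), t' ⊆ t ∧ (∀ k ∈ t', 0 ≤ c' k) ∧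
      (∑ k ∈ t', c' k • g k = ∑ k ∈ t, c k • g k) ∧
      LinearIndependent ℝ (fun k : t' => g (k : κ)) := by
  classical
  intro n
  induction n with
  | zero =>
    intro t c hcard _
    have ht : t = ∅ := Finset.card_eq_zero.1 (Nat.le_zero.1 hcard)
    subst ht
    refine ⟨∅, c, Finset.Subset.refl _, fun k hk => absurd hk (Finset.notMem_empty k), rfl, ?_⟩
    exact linearIndependent_empty_type
  | succ n ih =>
    intro t c hcard hc
    by_cases hli : LinearIndependent ℝ (fun k : t => g (k : κ))
    · exact ⟨t, c, Finset.Subset.refl _, hc, rfl, hli⟩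
    · obtain ⟨d, hd0, kne, hkne⟩ := Fintype.not_linearIndependent_iff.1 hli
      set D : κ → ℝ := fun k => if h : k ∈ t then d ⟨k, h⟩ else 0 with hD
      have hDsum : ∑ k ∈ t, D k • g k = 0 := by
        rw [← Finset.sum_attach t (fun k => D k • g k)]
        rw [← hd0]
        exact Finset.sum_congr rfl fun k _ => by simp [hD, k.2]
      have key : ∀ E : κ → ℝ, (∑ k ∈ t, E k • g k = 0) → (∃ k ∈ t, 0 < E k) →
          ∃ (t' : Finset κ) (c' : κ → ℝ), t' ⊆ t ∧ (∀ k ∈ t', 0 ≤ c' k) ∧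
            (∑ k ∈ t', c' k • g k = ∑ k ∈ t, c k • g k) ∧
            LinearIndependent ℝ (fun k : t' => g (k : κ)) := by
        intro E hE0 ⟨kp, hkp, hkpE⟩
        have hne : (t.filter fun k => 0 < E k).Nonempty := ⟨kp, Finset.mem_filter.2 ⟨hkp, hkpE⟩⟩
        obtain ⟨k₀, hk₀mem, hk₀min⟩ :=
          Finset.exists_min_image (t.filter fun k => 0 < E k) (fun k => c k / E k) hne
        have hk₀t : k₀ ∈ t := (Finset.mem_filter.1 hk₀mem).1
        have hk₀E : 0 < E k₀ := (Finset.mem_filter.1 hk₀mem).2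
        set τ : ℝ := c k₀ / E k₀ with hτ
        have hτnn : 0 ≤ τ := div_nonneg (hc k₀ hk₀t) hk₀E.le
        set c' : κ → ℝ := fun k => c k - τ * E k with hc'
        have hc'nn : ∀ k ∈ t, 0 ≤ c' k := by
          intro k hk
          by_cases h : 0 < E k
          · have h1 : τ ≤ c k / E k := hk₀min k (Finset.mem_filter.2 ⟨hk, h⟩)
            have h2 : τ * E k ≤ (c k / E k) * E k := mul_le_mul_of_nonneg_right h1 h.le
            have h3 : (c k / E k) * E k = c k := div_mul_cancel₀ _ (ne_of_gt h)
            simp only [hc']; linarith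
          · push_neg at h
            have : τ * E k ≤ 0 := mul_nonpos_of_nonneg_of_nonpos hτnn h
            have := hc k hk
            simp only [hc']; linarith
        have hc'k₀ : c' k₀ = 0 := by
          simp only [hc', hτ]
          field_simp
          simp
        have hsum : ∑ k ∈ t, c' k • g k = ∑ k ∈ t, c k • g k := by
          have : ∑ k ∈ t, c' k • g k = ∑ k ∈ t, c k • g k - τ • ∑ k ∈ t, E k • g k := by
            rw [Finset.smul_sum, ← Finset.sum_sub_distrib]
            refine Finset.sum_congr rfl fun k _ => ?_
            simp only [hc', sub_smul, smul_smul]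
          rw [this, hE0, smul_zero, sub_zero]
        have hsum2 : ∑ k ∈ t.erase k₀, c' k • g k = ∑ k ∈ t, c k • g k := by
          rw [← hsum]
          rw [← Finset.add_sum_erase t (fun k => c' k • g k) hk₀t]
          rw [hc'k₀, zero_smul, zero_add]
        have hcard' : (t.erase k₀).card ≤ n := by
          have := Finset.card_erase_of_mem hk₀t
          have := Finset.card_pos.2 ⟨k₀, hk₀t⟩
          omega
        obtain ⟨t', c'', hsub, hnn, heq, hli'⟩ :=
          ih (t.erase k₀) c' hcard' (fun k hk => hc'nn k (Finset.mem_of_mem_erase hk))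
        exact ⟨t', c'', hsub.trans (Finset.erase_subset _ _), hnn, by rw [heq, hsum2], hli'⟩
      by_cases hpos : ∃ k ∈ t, 0 < D k
      · exact key D hDsum hpos
      · refine key (fun k => -D k) ?_ ?_
        · rw [← neg_eq_zero, ← Finset.sum_neg_distrib]
          rw [← hDsum]
          exact Finset.sum_congr rfl fun k _ => by rw [neg_smul, neg_neg]
        · push_neg at hpos
          refine ⟨(kne : κ), kne.2, ?_⟩
          have h1 : D kne ≠ 0 := by
            simp only [hD, dif_pos kne.2]
            simpa using hkne
          have h2 : D kne ≤ 0 := hpos kne kne.2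
          have : D (kne : κ) < 0 := lt_of_le_of_ne h2 h1
          simpa using neg_pos.2 this

end GenericLinearAlgebra

lemma homMatrix_nonneg {a b : ConeCat} (φ : a ⟶ b) : ∀ i j, 0 ≤ homMatrix φ i j := φ.2.1

lemma homMatrix_inj {a b : ConeCat} (φ : a ⟶ b) :
    Function.Injective (homMatrix φ).mulVecLin := φ.2.2

lemma homMatrix_comp {a b c : ConeCat} (φ : a ⟶ b) (ψ : b ⟶ c) :
    homMatrix (φ ≫ ψ) = homMatrix ψ * homMatrix φ := rfl

lemma homMatrix_id (a : ConeCat) : homMatrix (𝟙 a) = 1 := rfl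

/-- `w` is the positive rescaling of the image of `y` under the linear map of `φ`. -/
def Covers {a b : ConeCat} (φ : a ⟶ b) (y : stdSimplex' a.n) (w : stdSimplex' b.n) : Prop :=
  ∃ c : ℝ, 0 < c ∧ ∀ j, w.val j = c * ∑ i, ((homMatrix φ j i : ℤ) : ℝ) * y.val i

lemma covers_id {a : ConeCat} (y : stdSimplex' a.n) : Covers (𝟙 a) y y := by
  refine ⟨1, one_pos, fun j => ?_⟩
  rw [one_mul, homMatrix_id]
  rw [Finset.sum_eq_single j]
  · simp [Matrix.one_apply]
  · intro i _ hij
    simp [Matrix.one_apply, (Ne.symm hij)]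
  · intro h
    exact absurd (Finset.mem_univ j) h

lemma covers_comp {a b c : ConeCat} {φ : a ⟶ b} {ψ : b ⟶ c}
    {y : stdSimplex' a.n} {w : stdSimplex' b.n} {v : stdSimplex' c.n}
    (h1 : Covers φ y w) (h2 : Covers ψ w v) : Covers (φ ≫ ψ) y v := by
  obtain ⟨c1, hc1, h1⟩ := h1
  obtain ⟨c2, hc2, h2⟩ := h2
  refine ⟨c2 * c1, mul_pos hc2 hc1, fun j => ?_⟩
  rw [h2 j, homMatrix_comp]
  calc c2 * ∑ i, ((homMatrix ψ j i : ℤ) : ℝ) * w.val i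
      = c2 * ∑ i, ((homMatrix ψ j i : ℤ) : ℝ) * (c1 * ∑ l, ((homMatrix φ i l : ℤ) : ℝ) * y.val l) := by
        congr 1
        exact Finset.sum_congr rfl fun i _ => by rw [h1 i]
    _ = c2 * c1 * ∑ l, (∑ i, ((homMatrix ψ j i : ℤ) : ℝ) * ((homMatrix φ i l : ℤ) : ℝ)) * y.val l := by
        simp only [Finset.mul_sum, Finset.sum_mul]
        rw [Finset.sum_comm]
        exact Finset.sum_congr rfl fun i _ => Finset.sum_congr rfl fun l _ => by ring
    _ = c2 * c1 * ∑ i, (((homMatrix ψ * homMatrix φ) j i : ℤ) : ℝ) * y.val i := by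
        congr 1
        refine Finset.sum_congr rfl fun i _ => ?_
        rw [Matrix.mul_apply]
        push_cast
        ring

open Matrix in
/-- Each column of a morphism matrix has positive sum. -/
lemma homMatrix_colsum_pos {a b : ConeCat} (φ : a ⟶ b) (i : Fin a.n) :
    0 < ∑ j, homMatrix φ j i := by
  have hcol : ∃ j, homMatrix φ j i ≠ 0 := by
    by_contra h
    push_neg at h
    have h1 : (homMatrix φ).mulVecLin (Pi.single i 1) = (homMatrix φ).mulVecLin 0 := by
      rw [map_zero]
      funext j
      rw [Matrix.mulVecLin_apply]
      simp only [Matrix.mulVec, dotProduct]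
      rw [Finset.sum_eq_single i]
      · rw [h j]; simp
      · intro l _ hl; simp [Pi.single_eq_of_ne hl]
      · intro hmem; exact absurd (Finset.mem_univ i) hmem
    have := homMatrix_inj φ h1
    have h2 := congrFun this i
    simp [Pi.single_eq_same] at h2
  obtain ⟨j, hj⟩ := hcol
  refine Finset.sum_pos' (fun j' _ => homMatrix_nonneg φ j' i) ⟨j, Finset.mem_univ j, ?_⟩
  exact lt_of_le_of_ne (homMatrix_nonneg φ j i) (Ne.symm hj)

/-- Every point of the simplex is carried by `φ` onto a point of the target simplex,
up to positive rescaling. -/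
lemma covers_exists {a b : ConeCat} (φ : a ⟶ b) (z : stdSimplex' a.n) :
    ∃ w : stdSimplex' b.n, Covers φ z w := by
  set s : ℝ := ∑ j, ∑ i, ((homMatrix φ j i : ℤ) : ℝ) * z.val i with hs
  have hterm : ∀ j i, 0 ≤ ((homMatrix φ j i : ℤ) : ℝ) * z.val i := fun j i =>
    mul_nonneg (by exact_mod_cast homMatrix_nonneg φ j i) (z.2.1 i)
  have hspos : 0 < s := by
    rw [hs, Finset.sum_comm]
    -- s = ∑ i, (∑ j, φ j i) * z i
    have hzp : ∃ i, 0 < z.val i := by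
      by_contra h
      push_neg at h
      have hall : ∀ i, z.val i = 0 := fun i => le_antisymm (h i) (z.2.1 i)
      have hz1 := z.2.2
      rw [Finset.sum_congr rfl fun i _ => hall i] at hz1
      simp at hz1
    obtain ⟨i, hi⟩ := hzp
    refine Finset.sum_pos' (fun i' _ => Finset.sum_nonneg fun j _ => hterm j i') ⟨i, Finset.mem_univ i, ?_⟩
    have hcs : 0 < ∑ j, ((homMatrix φ j i : ℤ) : ℝ) := by exact_mod_cast homMatrix_colsum_pos φ i
    rw [← Finset.sum_mul]
    exact mul_pos hcs hi
  refine ⟨⟨fun j => s⁻¹ * ∑ i, ((homMatrix φ j i : ℤ) : ℝ) * z.val i, ?_, ?_⟩,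
    ⟨s⁻¹, inv_pos.2 hspos, fun j => rfl⟩⟩
  · intro j
    exact mul_nonneg (inv_pos.2 hspos).le (Finset.sum_nonneg fun i _ => hterm j i)
  · rw [← Finset.mul_sum, ← hs, inv_mul_cancel₀ (ne_of_gt hspos)]



open Matrix in
lemma hom_inj_real {a b : ConeCat} (φ : a ⟶ b) (x : Fin a.n → ℝ)
    (hx : ∀ j, ∑ i, ((homMatrix φ j i : ℤ) : ℝ) * x i = 0) : x = 0 := by
  apply inj_transfer (homMatrix φ) (homMatrix_inj φ)
  funext j
  simpa [Matrix.mulVec, dotProduct, Matrix.map_apply] using hx j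

open Matrix in
/-- The crux: two rational simplices through a common point admit a common refinement. -/
lemma crux {q m r : ConeCat} (φ : m ⟶ q) (ψ : r ⟶ q)
    (y : stdSimplex' m.n) (v : stdSimplex' r.n)
    {c₀ c₁ : ℝ} (hc₀ : 0 < c₀) (hc₁ : 0 < c₁)
    (heq : ∀ j, c₀ * ∑ i, ((homMatrix φ j i : ℤ) : ℝ) * y.val i
             = c₁ * ∑ i, ((homMatrix ψ j i : ℤ) : ℝ) * v.val i) :
    ∃ (s : ConeCat) (χ₀ : s ⟶ m) (χ₁ : s ⟶ r) (u : stdSimplex' s.n),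
      χ₀ ≫ φ = χ₁ ≫ ψ ∧ Covers χ₀ u y ∧ Covers χ₁ u v := by
  classical
  set Mq : Matrix (Fin q.n) (Fin m.n ⊕ Fin r.n) ℚ := Matrix.of fun j i =>
    Sum.elim (fun i' => ((homMatrix φ j i' : ℤ) : ℚ)) (fun i' => -((homMatrix ψ j i' : ℤ) : ℚ)) i
    with hMqdef
  set z : (Fin m.n ⊕ Fin r.n) → ℝ :=
    Sum.elim (fun i => c₀ * y.val i) (fun i => c₁ * v.val i) with hzdef
  have hznn : ∀ i, 0 ≤ z i := by
    intro i; cases i with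
    | inl i => exact mul_nonneg hc₀.le (y.2.1 i)
    | inr i => exact mul_nonneg hc₁.le (v.2.1 i)
  have hzker : (Mq.map ((↑) : ℚ → ℝ)).mulVec z = 0 := by
    funext j
    simp only [Matrix.mulVec, dotProduct, Matrix.map_apply, Pi.zero_apply]
    rw [Fintype.sum_sum_type]
    have h1 : ∀ i, ((Mq j (Sum.inl i) : ℚ) : ℝ) * z (Sum.inl i)
        = c₀ * (((homMatrix φ j i : ℤ) : ℝ) * y.val i) := by
      intro i; simp only [hMqdef, hzdef, Matrix.of_apply, Sum.elim_inl]; push_cast; ring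
    have h2 : ∀ i, ((Mq j (Sum.inr i) : ℚ) : ℝ) * z (Sum.inr i)
        = -(c₁ * (((homMatrix ψ j i : ℤ) : ℝ) * v.val i)) := by
      intro i; simp only [hMqdef, hzdef, Matrix.of_apply, Sum.elim_inr]; push_cast; ring
    rw [Finset.sum_congr rfl fun i _ => h1 i, Finset.sum_congr rfl fun i _ => h2 i]
    rw [Finset.sum_neg_distrib, ← Finset.mul_sum, ← Finset.mul_sum]
    rw [heq j]; ring
  obtain ⟨K, us, as, hker, husnn, hasnn, hsum⟩ :=
    conic_decomp Mq (Fintype.card (Fin m.n ⊕ Fin r.n)) z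
      ((Finset.card_filter_le _ _).trans (le_of_eq Finset.card_univ)) hzker hznn
  choose d w hd hw using fun k => common_denom (us k)
  set lam : Fin K → Fin m.n → ℤ := fun k i => w k (Sum.inl i) with hlamdef
  set mu : Fin K → Fin r.n → ℤ := fun k i => w k (Sum.inr i) with hmudef
  have hwnn : ∀ k i, 0 ≤ w k i := by
    intro k i
    have h1 : (0:ℚ) ≤ (w k i : ℚ) := by
      rw [hw k i]
      exact mul_nonneg (by positivity) (husnn k i)
    exact_mod_cast h1
  -- A λ_k = B μ_k over ℤ
  have hg : ∀ k j, ∑ i, homMatrix φ j i * lam k i = ∑ i, homMatrix ψ j i * mu k i := by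
    intro k j
    have h0 : ∑ i, Mq j i * us k i = 0 := by
      have := congrFun (hker k) j
      simpa [Matrix.mulVec, dotProduct] using this
    have h1 : ∑ i, Mq j i * (w k i : ℚ) = 0 := by
      calc ∑ i, Mq j i * (w k i : ℚ) = (d k : ℚ) * ∑ i, Mq j i * us k i := by
            rw [Finset.mul_sum]
            exact Finset.sum_congr rfl fun i _ => by rw [hw k i]; ring
        _ = 0 := by rw [h0, mul_zero]
    rw [Fintype.sum_sum_type] at h1
    have h2 : ∀ i, Mq j (Sum.inl i) * (w k (Sum.inl i) : ℚ)
        = ((homMatrix φ j i * lam k i : ℤ) : ℚ) := by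
      intro i; simp only [hMqdef, hlamdef, Matrix.of_apply, Sum.elim_inl]; push_cast; ring
    have h3 : ∀ i, Mq j (Sum.inr i) * (w k (Sum.inr i) : ℚ)
        = -((homMatrix ψ j i * mu k i : ℤ) : ℚ) := by
      intro i; simp only [hMqdef, hmudef, Matrix.of_apply, Sum.elim_inr]; push_cast; ring
    rw [Finset.sum_congr rfl fun i _ => h2 i, Finset.sum_congr rfl fun i _ => h3 i] at h1
    have h4 : ((∑ i, homMatrix φ j i * lam k i : ℤ) : ℚ)
        = ((∑ i, homMatrix ψ j i * mu k i : ℤ) : ℚ) := by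
      push_cast at h1 ⊢
      rw [Finset.sum_neg_distrib] at h1
      linarith [h1]
    exact_mod_cast h4
  -- real coefficients
  set b : Fin K → ℝ := fun k => as k / (d k : ℝ) with hbdef
  have hbnn : ∀ k, 0 ≤ b k := fun k => div_nonneg (hasnn k) (by positivity)
  have hcast : ∀ k i, ((w k i : ℤ) : ℝ) = (d k : ℝ) * ((us k i : ℚ) : ℝ) := by
    intro k i
    have := hw k i
    exact_mod_cast congrArg (fun x : ℚ => (x : ℝ)) this
  have hbw : ∀ k i, as k * ((us k i : ℚ) : ℝ) = b k * ((w k i : ℤ) : ℝ) := by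
    intro k i
    have hdne : ((d k : ℕ) : ℝ) ≠ 0 := Nat.cast_ne_zero.mpr (hd k).ne'
    rw [hcast k i, hbdef]
    field_simp
  have hzl : ∀ i, c₀ * y.val i = ∑ k, b k * ((lam k i : ℤ) : ℝ) := by
    intro i
    have := hsum (Sum.inl i)
    simp only [hzdef, Sum.elim_inl] at this
    rw [this]
    exact Finset.sum_congr rfl fun k _ => hbw k (Sum.inl i)
  have hzr : ∀ i, c₁ * v.val i = ∑ k, b k * ((mu k i : ℤ) : ℝ) := by
    intro i
    have := hsum (Sum.inr i)
    simp only [hzdef, Sum.elim_inr] at this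
    rw [this]
    exact Finset.sum_congr rfl fun k _ => hbw k (Sum.inr i)
  -- the generator vectors
  set gZ : Fin K → Fin q.n → ℤ := fun k j => ∑ i, homMatrix φ j i * lam k i with hgZdef
  set gR : Fin K → (Fin q.n → ℝ) := fun k => fun j => ((gZ k j : ℤ) : ℝ) with hgRdef
  obtain ⟨T, b', _, hb'nn, hsumeq, hli⟩ :=
    caratheodory_cone gR K Finset.univ b (by simp) (fun k _ => hbnn k)
  -- pointwise Carathéodory identity
  have hptw : ∀ j, ∑ k ∈ T, b' k * gR k j = ∑ k, b k * gR k j := by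
    intro j
    have h1 := congrFun hsumeq j
    simpa [Finset.sum_apply, Pi.smul_apply, smul_eq_mul] using h1
  have hWphi : ∀ j, ∑ k, b k * gR k j = c₀ * ∑ i, ((homMatrix φ j i : ℤ) : ℝ) * y.val i := by
    intro j
    have h1 : ∀ k, b k * gR k j
        = ∑ i, ((homMatrix φ j i : ℤ) : ℝ) * (b k * ((lam k i : ℤ) : ℝ)) := by
      intro k
      simp only [hgRdef, hgZdef]
      push_cast
      rw [Finset.mul_sum]
      exact Finset.sum_congr rfl fun i _ => by ring
    rw [Finset.sum_congr rfl fun k _ => h1 k, Finset.sum_comm, Finset.mul_sum]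
    refine Finset.sum_congr rfl fun i _ => ?_
    rw [← Finset.mul_sum, ← hzl i]
    ring
  -- (†) : c₀·y is the T-combination of the λ's
  have hlamT : ∀ i, c₀ * y.val i = ∑ k ∈ T, b' k * ((lam k i : ℤ) : ℝ) := by
    have h0 : (fun i => c₀ * y.val i - ∑ k ∈ T, b' k * ((lam k i : ℤ) : ℝ)) = 0 := by
      apply hom_inj_real φ
      intro j
      have e1 : ∑ i, ((homMatrix φ j i : ℤ) : ℝ) * (∑ k ∈ T, b' k * ((lam k i : ℤ) : ℝ))
          = ∑ k ∈ T, b' k * gR k j := by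
        simp only [Finset.mul_sum]
        rw [Finset.sum_comm]
        refine Finset.sum_congr rfl fun k _ => ?_
        simp only [hgRdef, hgZdef]
        push_cast
        rw [Finset.mul_sum]
        exact Finset.sum_congr rfl fun i _ => by ring
      have e2 : ∑ i, ((homMatrix φ j i : ℤ) : ℝ) * (c₀ * y.val i)
          = c₀ * ∑ i, ((homMatrix φ j i : ℤ) : ℝ) * y.val i := by
        rw [Finset.mul_sum]; exact Finset.sum_congr rfl fun i _ => by ring
      simp only [mul_sub]
      rw [Finset.sum_sub_distrib, e1, e2, hptw j, hWphi j, sub_self]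
    intro i
    have h1 := congrFun h0 i
    simp only [Pi.zero_apply] at h1
    linarith [h1]
  -- (‡) : c₁·v is the T-combination of the μ's
  have hmuT : ∀ i, c₁ * v.val i = ∑ k ∈ T, b' k * ((mu k i : ℤ) : ℝ) := by
    have h0 : (fun i => c₁ * v.val i - ∑ k ∈ T, b' k * ((mu k i : ℤ) : ℝ)) = 0 := by
      apply hom_inj_real ψ
      intro j
      have e1 : ∑ i, ((homMatrix ψ j i : ℤ) : ℝ) * (∑ k ∈ T, b' k * ((mu k i : ℤ) : ℝ))
          = ∑ k ∈ T, b' k * gR k j := by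
        simp only [Finset.mul_sum]
        rw [Finset.sum_comm]
        refine Finset.sum_congr rfl fun k _ => ?_
        simp only [hgRdef, hgZdef]
        rw [hg k j]
        push_cast
        rw [Finset.mul_sum]
        exact Finset.sum_congr rfl fun i _ => by ring
      have e2 : ∑ i, ((homMatrix ψ j i : ℤ) : ℝ) * (c₁ * v.val i)
          = c₁ * ∑ i, ((homMatrix ψ j i : ℤ) : ℝ) * v.val i := by
        rw [Finset.mul_sum]; exact Finset.sum_congr rfl fun i _ => by ring
      simp only [mul_sub]
      rw [Finset.sum_sub_distrib, e1, e2, hptw j, hWphi j, ← heq j, sub_self]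
    intro i
    have h1 := congrFun h0 i
    simp only [Pi.zero_apply] at h1
    linarith [h1]
  -- the total coefficient is positive
  set sT : ℝ := ∑ k ∈ T, b' k with hsTdef
  have hsTnn : 0 ≤ sT := Finset.sum_nonneg fun k hk => hb'nn k hk
  have hsTpos : 0 < sT := by
    rcases lt_or_eq_of_le hsTnn with h | h
    · exact h
    · exfalso
      have hz0 : ∀ k ∈ T, b' k = 0 :=
        (Finset.sum_eq_zero_iff_of_nonneg fun k hk => hb'nn k hk).1 h.symm
      have hy0 : ∀ i, y.val i = 0 := by
        intro i
        have h2 : c₀ * y.val i = 0 := by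
          rw [hlamT i]
          exact Finset.sum_eq_zero fun k hk => by rw [hz0 k hk, zero_mul]
        exact (mul_eq_zero.1 h2).resolve_left hc₀.ne'
      have hy1 := y.2.2
      rw [Finset.sum_congr rfl fun i _ => hy0 i] at hy1
      simp at hy1
  have hTne : T.Nonempty := by
    by_contra h
    rw [Finset.not_nonempty_iff_eq_empty] at h
    rw [hsTdef, h, Finset.sum_empty] at hsTpos
    exact lt_irrefl 0 hsTpos
  -- the common refinement cone
  set sc : ConeCat := ⟨T.card, Finset.card_pos.2 hTne⟩ with hscdef
  set e : Fin T.card ≃ {x // x ∈ T} := T.equivFin.symm with hedef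
  set X0 : Matrix (Fin m.n) (Fin T.card) ℤ :=
    Matrix.of fun i k => lam ((e k : {x // x ∈ T}) : Fin K) i with hX0def
  set X1 : Matrix (Fin r.n) (Fin T.card) ℤ :=
    Matrix.of fun i k => mu ((e k : {x // x ∈ T}) : Fin K) i with hX1def
  have hX01 : homMatrix φ * X0 = homMatrix ψ * X1 := by
    ext j k
    simp only [Matrix.mul_apply, hX0def, hX1def, Matrix.of_apply]
    exact hg ((e k : {x // x ∈ T}) : Fin K) j
  -- injectivity of both refinement matrices
  have hker0 : ∀ (X : Matrix (Fin m.n) (Fin T.card) ℤ), X = X0 →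
      ∀ x : Fin T.card → ℤ, X0.mulVec x = 0 → x = 0 := by
    intro _ _ x hx
    have hco := Fintype.linearIndependent_iff.1 hli (fun k => ((x (e.symm k) : ℤ) : ℝ)) ?_
    · funext k'
      have h1 := hco (e k')
      rw [Equiv.symm_apply_apply] at h1
      exact_mod_cast h1
    · funext j
      rw [Finset.sum_apply, Pi.zero_apply]
      have h2 : ∀ k : {x // x ∈ T},
          (((x (e.symm k) : ℤ) : ℝ) • gR (k : Fin K)) j
            = ((x (e.symm k) : ℤ) : ℝ) * ((gZ (k : Fin K) j : ℤ) : ℝ) := by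
        intro k; simp [hgRdef]
      rw [Finset.sum_congr rfl fun k _ => h2 k]
      rw [← Equiv.sum_comp e
        (fun k => ((x (e.symm k) : ℤ) : ℝ) * ((gZ (k : Fin K) j : ℤ) : ℝ))]
      have hZ : ∑ k', x k' * gZ ((e k' : {x // x ∈ T}) : Fin K) j = 0 := by
        have h1 : ∀ k', x k' * gZ ((e k' : {x // x ∈ T}) : Fin K) j
            = ∑ i, homMatrix φ j i * (X0 i k' * x k') := by
          intro k'
          simp only [hgZdef, hX0def, Matrix.of_apply]
          rw [Finset.mul_sum]
          exact Finset.sum_congr rfl fun i _ => by ring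
        rw [Finset.sum_congr rfl fun k' _ => h1 k', Finset.sum_comm]
        refine Finset.sum_eq_zero fun i _ => ?_
        have h3 : X0.mulVec x i = 0 := by rw [hx]; rfl
        calc ∑ k', homMatrix φ j i * (X0 i k' * x k')
            = homMatrix φ j i * X0.mulVec x i := by
              simp only [Matrix.mulVec, dotProduct, Finset.mul_sum]
          _ = 0 := by rw [h3, mul_zero]
      calc ∑ k', ((x (e.symm (e k')) : ℤ) : ℝ) * ((gZ ((e k' : {x // x ∈ T}) : Fin K) j : ℤ) : ℝ)
          = ((∑ k', x k' * gZ ((e k' : {x // x ∈ T}) : Fin K) j : ℤ) : ℝ) := by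
            push_cast
            exact Finset.sum_congr rfl fun k' _ => by rw [Equiv.symm_apply_apply]
        _ = 0 := by rw [hZ]; simp
  have hker1 : ∀ x : Fin T.card → ℤ, X1.mulVec x = 0 → x = 0 := by
    intro x hx
    have hco := Fintype.linearIndependent_iff.1 hli (fun k => ((x (e.symm k) : ℤ) : ℝ)) ?_
    · funext k'
      have h1 := hco (e k')
      rw [Equiv.symm_apply_apply] at h1
      exact_mod_cast h1
    · funext j
      rw [Finset.sum_apply, Pi.zero_apply]
      have h2 : ∀ k : {x // x ∈ T},
          (((x (e.symm k) : ℤ) : ℝ) • gR (k : Fin K)) j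
            = ((x (e.symm k) : ℤ) : ℝ) * ((gZ (k : Fin K) j : ℤ) : ℝ) := by
        intro k; simp [hgRdef]
      rw [Finset.sum_congr rfl fun k _ => h2 k]
      rw [← Equiv.sum_comp e
        (fun k => ((x (e.symm k) : ℤ) : ℝ) * ((gZ (k : Fin K) j : ℤ) : ℝ))]
      have hZ : ∑ k', x k' * gZ ((e k' : {x // x ∈ T}) : Fin K) j = 0 := by
        have h1 : ∀ k', x k' * gZ ((e k' : {x // x ∈ T}) : Fin K) j
            = ∑ i, homMatrix ψ j i * (X1 i k' * x k') := by
          intro k'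
          simp only [hgZdef, hX1def, Matrix.of_apply]
          rw [hg ((e k' : {x // x ∈ T}) : Fin K) j]
          rw [Finset.mul_sum]
          exact Finset.sum_congr rfl fun i _ => by ring
        rw [Finset.sum_congr rfl fun k' _ => h1 k', Finset.sum_comm]
        refine Finset.sum_eq_zero fun i _ => ?_
        have h3 : X1.mulVec x i = 0 := by rw [hx]; rfl
        calc ∑ k', homMatrix ψ j i * (X1 i k' * x k')
            = homMatrix ψ j i * X1.mulVec x i := by
              simp only [Matrix.mulVec, dotProduct, Finset.mul_sum]
          _ = 0 := by rw [h3, mul_zero]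
      calc ∑ k', ((x (e.symm (e k')) : ℤ) : ℝ) * ((gZ ((e k' : {x // x ∈ T}) : Fin K) j : ℤ) : ℝ)
          = ((∑ k', x k' * gZ ((e k' : {x // x ∈ T}) : Fin K) j : ℤ) : ℝ) := by
            push_cast
            exact Finset.sum_congr rfl fun k' _ => by rw [Equiv.symm_apply_apply]
        _ = 0 := by rw [hZ]; simp
  have hinj0 : Function.Injective X0.mulVecLin := by
    intro x1 x2 h12
    have h1 : X0.mulVec (x1 - x2) = 0 := by
      have h2 : X0.mulVecLin (x1 - x2) = 0 := by rw [map_sub, h12, sub_self]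
      simpa [Matrix.mulVecLin_apply] using h2
    exact sub_eq_zero.1 (hker0 X0 rfl _ h1)
  have hinj1 : Function.Injective X1.mulVecLin := by
    intro x1 x2 h12
    have h1 : X1.mulVec (x1 - x2) = 0 := by
      have h2 : X1.mulVecLin (x1 - x2) = 0 := by rw [map_sub, h12, sub_self]
      simpa [Matrix.mulVecLin_apply] using h2
    exact sub_eq_zero.1 (hker1 _ h1)
  -- the two refinement morphisms
  have hX0nn : ∀ i k, 0 ≤ X0 i k := fun i k => hwnn _ (Sum.inl i)
  have hX1nn : ∀ i k, 0 ≤ X1 i k := fun i k => hwnn _ (Sum.inr i)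
  set χ₀ : sc ⟶ m := ⟨X0, hX0nn, hinj0⟩ with hχ₀def
  set χ₁ : sc ⟶ r := ⟨X1, hX1nn, hinj1⟩ with hχ₁def
  -- the point of the refinement simplex
  have hsum_e : ∑ k' : Fin T.card, b' ((e k' : {x // x ∈ T}) : Fin K) = sT := by
    rw [hsTdef, ← Finset.sum_coe_sort T b']
    exact Equiv.sum_comp e (fun k : {x // x ∈ T} => b' (k : Fin K))
  set u : stdSimplex' sc.n :=
    ⟨fun k => b' ((e k : {x // x ∈ T}) : Fin K) / sT,
      fun k => div_nonneg (hb'nn _ (e k).2) hsTpos.le,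
      by rw [← Finset.sum_div, hsum_e, div_self hsTpos.ne']⟩ with hudef
  -- Covers χ₀ u y
  have hcov0 : Covers χ₀ u y := by
    refine ⟨sT / c₀, div_pos hsTpos hc₀, fun i => ?_⟩
    have h1 : ∑ k' : Fin T.card, ((homMatrix χ₀ i k' : ℤ) : ℝ) * u.val k'
        = (∑ k' : Fin T.card,
            b' ((e k' : {x // x ∈ T}) : Fin K) * ((lam ((e k' : {x // x ∈ T}) : Fin K) i : ℤ) : ℝ)) / sT := by
      rw [Finset.sum_div]
      refine Finset.sum_congr rfl fun k' _ => ?_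
      show ((X0 i k' : ℤ) : ℝ) * (b' ((e k' : {x // x ∈ T}) : Fin K) / sT) = _
      simp only [hX0def, Matrix.of_apply]
      ring
    have h2 : ∑ k' : Fin T.card,
        b' ((e k' : {x // x ∈ T}) : Fin K) * ((lam ((e k' : {x // x ∈ T}) : Fin K) i : ℤ) : ℝ)
        = ∑ k ∈ T, b' k * ((lam k i : ℤ) : ℝ) := by
      rw [← Finset.sum_coe_sort T (fun k => b' k * ((lam k i : ℤ) : ℝ))]
      exact Equiv.sum_comp e (fun k : {x // x ∈ T} => b' (k : Fin K) * ((lam (k : Fin K) i : ℤ) : ℝ))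
    rw [h1, h2, ← hlamT i]
    field_simp
  have hcov1 : Covers χ₁ u v := by
    refine ⟨sT / c₁, div_pos hsTpos hc₁, fun i => ?_⟩
    have h1 : ∑ k' : Fin T.card, ((homMatrix χ₁ i k' : ℤ) : ℝ) * u.val k'
        = (∑ k' : Fin T.card,
            b' ((e k' : {x // x ∈ T}) : Fin K) * ((mu ((e k' : {x // x ∈ T}) : Fin K) i : ℤ) : ℝ)) / sT := by
      rw [Finset.sum_div]
      refine Finset.sum_congr rfl fun k' _ => ?_
      show ((X1 i k' : ℤ) : ℝ) * (b' ((e k' : {x // x ∈ T}) : Fin K) / sT) = _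
      simp only [hX1def, Matrix.of_apply]
      ring
    have h2 : ∑ k' : Fin T.card,
        b' ((e k' : {x // x ∈ T}) : Fin K) * ((mu ((e k' : {x // x ∈ T}) : Fin K) i : ℤ) : ℝ)
        = ∑ k ∈ T, b' k * ((mu k i : ℤ) : ℝ) := by
      rw [← Finset.sum_coe_sort T (fun k => b' k * ((mu k i : ℤ) : ℝ))]
      exact Equiv.sum_comp e (fun k : {x // x ∈ T} => b' (k : Fin K) * ((mu (k : Fin K) i : ℤ) : ℝ))
    rw [h1, h2, ← hmuT i]
    field_simp
  refine ⟨sc, χ₀, χ₁, u, ?_, hcov0, hcov1⟩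
  apply Subtype.ext
  show homMatrix φ * X0 = homMatrix ψ * X1
  exact hX01

/-- Two points of `⨿ Fₙ × Δ^{n-1}` are linked if they are both images (up to positive
rescaling) of one point in a common refinement. -/
def Link (F : ConeCatᵒᵖ ⥤ Type) (p q : SimpPt F) : Prop :=
  ∃ (m : ConeCat) (ξ : F.obj (Opposite.op m)) (φ₀ : m ⟶ p.1) (φ₁ : m ⟶ q.1)
    (y : stdSimplex' m.n),
    F.map φ₀.op p.2.1 = ξ ∧ F.map φ₁.op q.2.1 = ξ ∧ Covers φ₀ y p.2.2 ∧ Covers φ₁ y q.2.2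

lemma map_op_comp (F : ConeCatᵒᵖ ⥤ Type) {a b c : ConeCat} (α : a ⟶ b) (β : b ⟶ c)
    (ξc : F.obj (Opposite.op c)) :
    F.map (α ≫ β).op ξc = F.map α.op (F.map β.op ξc) := by
  rw [CategoryTheory.op_comp, F.map_comp]
  rfl

lemma link_refl (F : ConeCatᵒᵖ ⥤ Type) (p : SimpPt F) : Link F p p :=
  ⟨p.1, p.2.1, 𝟙 p.1, 𝟙 p.1, p.2.2, by simp, by simp, covers_id _, covers_id _⟩

lemma link_symm {F : ConeCatᵒᵖ ⥤ Type} {p q : SimpPt F} (h : Link F p q) : Link F q p := by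
  obtain ⟨m, ξ, φ₀, φ₁, y, h1, h2, h3, h4⟩ := h
  exact ⟨m, ξ, φ₁, φ₀, y, h2, h1, h4, h3⟩

lemma link_of_rel {F : ConeCatᵒᵖ ⥤ Type} {p q : SimpPt F} (h : simpRel F p q) : Link F p q := by
  obtain ⟨φ, hξ, c, hc, hcoord⟩ := h
  exact ⟨p.1, p.2.1, 𝟙 p.1, φ, p.2.2, by simp, hξ, covers_id _, ⟨c, hc, hcoord⟩⟩

lemma link_trans {F : ConeCatᵒᵖ ⥤ Type} {p q r : SimpPt F}
    (h1 : Link F p q) (h2 : Link F q r) : Link F p r := by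
  obtain ⟨m, ξ, φ₀, φ₁, y, hξ0, hξ1, hcov0, hcov1⟩ := h1
  obtain ⟨m', ξ', φ₀', φ₁', y', hξ0', hξ1', hcov0', hcov1'⟩ := h2
  obtain ⟨c0, hc0, h0⟩ := hcov1
  obtain ⟨c0', hc0', h0'⟩ := hcov0'
  have heq : ∀ j, c0 * ∑ i, ((homMatrix φ₁ j i : ℤ) : ℝ) * y.val i
      = c0' * ∑ i, ((homMatrix φ₀' j i : ℤ) : ℝ) * y'.val i := fun j => by
    rw [← h0 j, ← h0' j]
  obtain ⟨s, χ₀, χ₁, u, hcomp, hcu0, hcu1⟩ := crux φ₁ φ₀' y y' hc0 hc0' heq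
  refine ⟨s, F.map (χ₀ ≫ φ₁).op q.2.1, χ₀ ≫ φ₀, χ₁ ≫ φ₁', u, ?_, ?_,
    covers_comp hcu0 hcov0, covers_comp hcu1 hcov1'⟩
  · rw [map_op_comp, map_op_comp, hξ0, hξ1]
  · rw [map_op_comp F χ₁ φ₁', hξ1', ← hξ0', ← map_op_comp F χ₁ φ₀', ← hcomp]

lemma link_of_eqvGen {F : ConeCatᵒᵖ ⥤ Type} {p q : SimpPt F}
    (h : Relation.EqvGen (simpRel F) p q) : Link F p q := by
  induction h with
  | rel a b hab => exact link_of_rel hab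
  | refl a => exact link_refl F a
  | symm a b _ ih => exact link_symm ih
  | trans a b c _ _ ih1 ih2 => exact link_trans ih1 ih2

/-- If a point `x` of the projective realization `P(F)` of a formal fan lies in the images
of two rational simplices `ξ₀(Δ^{n₀−1})` and `ξ₁(Δ^{n₁−1})`, then there are `m`, `ξ ∈ F_m`
and morphisms `φᵢ : [m] → [nᵢ]` with `φᵢ*(ξᵢ) = ξ` such that `x` lies in the image of the
rational simplex `ξ(Δ^{m−1})`, which is contained in both `ξ₀(Δ^{n₀−1})` and
`ξ₁(Δ^{n₁−1})`. -/
theorem point_in_two_rational_simplices (F : ConeCatᵒᵖ ⥤ Type)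
    (n₀ n₁ : ConeCat) (ξ₀ : F.obj (Opposite.op n₀)) (ξ₁ : F.obj (Opposite.op n₁))
    (x : ProjReal F) (y₀ : stdSimplex' n₀.n) (y₁ : stdSimplex' n₁.n)
    (h₀ : x = Quot.mk (simpRel F) ⟨n₀, ξ₀, y₀⟩)
    (h₁ : x = Quot.mk (simpRel F) ⟨n₁, ξ₁, y₁⟩) :
    ∃ (m : ConeCat) (ξ : F.obj (Opposite.op m)) (φ₀ : m ⟶ n₀) (φ₁ : m ⟶ n₁),
      F.map φ₀.op ξ₀ = ξ ∧ F.map φ₁.op ξ₁ = ξ ∧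
      (∃ y : stdSimplex' m.n, x = Quot.mk (simpRel F) ⟨m, ξ, y⟩) ∧
      (∀ z : stdSimplex' m.n, ∃ w : stdSimplex' n₀.n,
        Quot.mk (simpRel F) ⟨m, ξ, z⟩ = Quot.mk (simpRel F) ⟨n₀, ξ₀, w⟩) ∧
      (∀ z : stdSimplex' m.n, ∃ w : stdSimplex' n₁.n,
        Quot.mk (simpRel F) ⟨m, ξ, z⟩ = Quot.mk (simpRel F) ⟨n₁, ξ₁, w⟩) := by
  have hq : Quot.mk (simpRel F) (⟨n₀, ξ₀, y₀⟩ : SimpPt F)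
      = Quot.mk (simpRel F) (⟨n₁, ξ₁, y₁⟩ : SimpPt F) := h₀ ▸ h₁
  obtain ⟨m, ξ, φ₀, φ₁, y, hξ0, hξ1, hc0, hc1⟩ := link_of_eqvGen (Quot.eqvGen_exact hq)
  refine ⟨m, ξ, φ₀, φ₁, hξ0, hξ1, ⟨y, ?_⟩, ?_, ?_⟩
  · exact h₀.trans (Quot.sound ⟨φ₀, hξ0, hc0⟩).symm
  · intro z
    obtain ⟨w, hw⟩ := covers_exists φ₀ z
    exact ⟨w, Quot.sound ⟨φ₀, hξ0, hw⟩⟩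
  · intro z
    obtain ⟨w, hw⟩ := covers_exists φ₁ z
    exact ⟨w, Quot.sound ⟨φ₁, hξ1, hw⟩⟩
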